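/- arXiv:2208.04909 — 2 statements merged into one kernel-verified Lean document; each statement's English description precedes it below -/
import Mathlib

section
/- Let j be a positive half-integer, d = 2j+1, λ ∈ ℝ^d a probability vector, and |ψ⟩ = Σ_{k=1}^d √λ_k |k⟩⊗|k⟩ ∈ ℂ^d⊗ℂ^d. Then Var_ψ(j_x⊗𝟙 − 𝟙⊗j_x) + Var_ψ(j_y⊗𝟙 + 𝟙⊗j_y) + Var_ψ(j_z⊗𝟙 − 𝟙⊗j_z) = Σ_{k=1}^{d−1} k(d−k) (√λ_k − √λ_{k+1})², where Var_ψ(T) = ⟨T²⟩_ψ − ⟨T⟩_ψ². -/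
open Matrix Kronecker BigOperators Finset
open scoped ComplexOrder

/-- Expectation value ⟨A⟩_ρ = Re tr(ρ A). -/
noncomputable def expval {n : Type*} [Fintype n] (ρ A : Matrix n n ℂ) : ℝ :=
  ((ρ * A).trace).re

/-- A density matrix: positive semidefinite with unit trace. -/
def IsDensityMatrix {n : Type*} [Fintype n] (ρ : Matrix n n ℂ) : Prop :=
  ρ.PosSemidef ∧ ρ.trace = 1

/-- The projector |v⟩⟨v| associated to a vector. -/
noncomputable def pureState {n : Type*} (v : n → ℂ) : Matrix n n ℂ :=
  Matrix.vecMulVec v (star v)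

/-- A normalized vector. -/
def IsUnitVec {n : Type*} [Fintype n] (v : n → ℂ) : Prop :=
  ∑ i, Complex.normSq (v i) = 1

/-- The canonical Hermitian operator basis of ℂ^d, indexed by pairs (j,k):
diagonal operators for j = k, real operators for j < k, imaginary operators for j > k. -/
noncomputable def canonG (d : ℕ) : Fin d × Fin d → Matrix (Fin d) (Fin d) ℂ := fun μ =>
  if μ.1 = μ.2 then Matrix.single μ.1 μ.1 1
  else if μ.1 < μ.2 then
    ((Real.sqrt 2 : ℂ))⁻¹ • (Matrix.single μ.1 μ.2 1 + Matrix.single μ.2 μ.1 1)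
  else
    (Complex.I * ((Real.sqrt 2 : ℂ))⁻¹) •
      (Matrix.single μ.2 μ.1 1 - Matrix.single μ.1 μ.2 1)

/-- Covariance matrix of a family of observables w.r.t. a state ρ. -/
noncomputable def covMat {n K : Type*} [Fintype n] (ρ : Matrix n n ℂ)
    (M : K → Matrix n n ℂ) : Matrix K K ℝ :=
  Matrix.of fun j k =>
    (1/2 : ℝ) * expval ρ (M j * M k + M k * M j) - expval ρ (M j) * expval ρ (M k)

/-- The local observables (g_μ ⊗ 1, 1 ⊗ g_ν) on the bipartite space. -/
noncomputable def bipObs (d : ℕ) :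
    (Fin d × Fin d) ⊕ (Fin d × Fin d) → Matrix (Fin d × Fin d) (Fin d × Fin d) ℂ :=
  Sum.elim (fun μ => canonG d μ ⊗ₖ (1 : Matrix (Fin d) (Fin d) ℂ))
           (fun ν => (1 : Matrix (Fin d) (Fin d) ℂ) ⊗ₖ canonG d ν)

/-- The full covariance matrix Γ_ρ of the canonical bipartite observables. -/
noncomputable def GammaCM (d : ℕ) (ρ : Matrix (Fin d × Fin d) (Fin d × Fin d) ℂ) :
    Matrix ((Fin d × Fin d) ⊕ (Fin d × Fin d)) ((Fin d × Fin d) ⊕ (Fin d × Fin d)) ℝ :=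
  covMat ρ (bipObs d)

/-- The cross-covariance block X_ρ. -/
noncomputable def crossCov (d : ℕ) (ρ : Matrix (Fin d × Fin d) (Fin d × Fin d) ℂ) :
    Matrix (Fin d × Fin d) (Fin d × Fin d) ℝ :=
  Matrix.of fun μ ν =>
    expval ρ (canonG d μ ⊗ₖ canonG d ν)
      - expval ρ (canonG d μ ⊗ₖ 1) * expval ρ ((1 : Matrix (Fin d) (Fin d) ℂ) ⊗ₖ canonG d ν)

/-- Reduced state on the first subsystem. -/
noncomputable def redA (d : ℕ) (ρ : Matrix (Fin d × Fin d) (Fin d × Fin d) ℂ) :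
    Matrix (Fin d) (Fin d) ℂ :=
  Matrix.of fun i j => ∑ k, ρ (i, k) (j, k)

/-- Reduced state on the second subsystem. -/
noncomputable def redB (d : ℕ) (ρ : Matrix (Fin d × Fin d) (Fin d × Fin d) ℂ) :
    Matrix (Fin d) (Fin d) ℂ :=
  Matrix.of fun i j => ∑ k, ρ (k, i) (k, j)

/-- Purity tr(σ²) (real part). -/
noncomputable def purity {n : Type*} [Fintype n] (σ : Matrix n n ℂ) : ℝ :=
  ((σ * σ).trace).re

/-- Trace norm of a real matrix: sum of its singular values, i.e. tr √(XᵀX). -/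
noncomputable def traceNorm {n : Type*} [Fintype n] [DecidableEq n] (X : Matrix n n ℝ) : ℝ :=
  ((Matrix.posSemidef_conjTranspose_mul_self X).1.eigenvectorUnitary.1 *
    Matrix.diagonal ((RCLike.ofReal : ℝ → ℝ) ∘ (√·) ∘ (Matrix.posSemidef_conjTranspose_mul_self X).1.eigenvalues) *
    (star (Matrix.posSemidef_conjTranspose_mul_self X).1.eigenvectorUnitary : Matrix n n ℝ)).trace

/-- Schmidt rank of a pure state vector is the rank of its coefficient matrix. -/
def SchmidtRankLE (d r : ℕ) (v : Fin d × Fin d → ℂ) : Prop :=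
  (Matrix.of fun j k : Fin d => v (j, k)).rank ≤ r

/-- Schmidt number at most r. -/
def SchmidtNumberLE (d r : ℕ) (ρ : Matrix (Fin d × Fin d) (Fin d × Fin d) ℂ) : Prop :=
  ∃ (n : ℕ) (p : Fin n → ℝ) (ψ : Fin n → (Fin d × Fin d → ℂ)),
    (∀ k, 0 ≤ p k) ∧ (∑ k, p k = 1) ∧ (∀ k, IsUnitVec (ψ k)) ∧
    (∀ k, SchmidtRankLE d r (ψ k)) ∧
    ρ = ∑ k, (p k : ℂ) • pureState (ψ k)

/-- Variance of an observable in a state. -/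
noncomputable def varState {n : Type*} [Fintype n] (σ A : Matrix n n ℂ) : ℝ :=
  expval σ (A * A) - (expval σ A)^2

/-- The magnetic quantum number m_k = k - j - 1 (0-indexed: k - (d-1)/2). -/
noncomputable def spinM (d : ℕ) (k : Fin d) : ℝ := (k : ℝ) - ((d : ℝ) - 1) / 2

/-- The raising operator j₊ for spin j = (d-1)/2. -/
noncomputable def spinPlus (d : ℕ) : Matrix (Fin d) (Fin d) ℂ :=
  Matrix.of fun a b => if (a : ℕ) = (b : ℕ) + 1 then
    (Real.sqrt (((d : ℝ) - 1) / 2 * (((d : ℝ) - 1) / 2 + 1) - spinM d b * (spinM d b + 1)) : ℂ)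
  else 0

/-- The spin operator j_x = (j₊ + j₋)/2. -/
noncomputable def spinX (d : ℕ) : Matrix (Fin d) (Fin d) ℂ :=
  (1 / 2 : ℂ) • (spinPlus d + (spinPlus d)ᴴ)

/-- The spin operator j_y = (j₊ - j₋)/(2i). -/
noncomputable def spinY (d : ℕ) : Matrix (Fin d) (Fin d) ℂ :=
  (-Complex.I / 2) • (spinPlus d - (spinPlus d)ᴴ)

/-- The spin operator j_z. -/
noncomputable def spinZ (d : ℕ) : Matrix (Fin d) (Fin d) ℂ :=
  Matrix.diagonal fun k => (spinM d k : ℂ)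

/-- The quantity Σ_{k=1}^{d-1} k(d-k)(√λ_k - √λ_{k+1})² (0-indexed λ). -/
noncomputable def spinVarSum (d : ℕ) (lam : Fin d → ℝ) : ℝ :=
  ∑ k ∈ Finset.range (d - 1),
    ((k : ℝ) + 1) * ((d : ℝ) - ((k : ℝ) + 1)) *
      (Real.sqrt (if h : k < d then lam ⟨k, h⟩ else 0) -
       Real.sqrt (if h : k + 1 < d then lam ⟨k + 1, h⟩ else 0)) ^ 2

/-- The bound B_{j,r}: infimum of Σ_k k(d-k)(√λ_k - √λ_{k+1})² over probability
vectors λ ∈ ℝ^d with at most r nonzero entries, where d = 2j+1. -/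
noncomputable def Bspin (d r : ℕ) : ℝ :=
  sInf { v : ℝ | ∃ lam : Fin d → ℝ, (∀ k, 0 ≤ lam k) ∧ (∑ k, lam k = 1) ∧
    (Finset.univ.filter fun k => lam k ≠ 0).card ≤ r ∧ v = spinVarSum d lam }

section SpinAux

lemma aux_expval_pureState {n : Type*} [Fintype n] (v : n → ℂ) (A : Matrix n n ℂ) :
    expval (pureState v) A = (star v ⬝ᵥ (A *ᵥ v)).re := by
  unfold expval pureState
  congr 1
  simp only [Matrix.trace, Matrix.diag_apply, Matrix.mul_apply, Matrix.vecMulVec_apply,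
    dotProduct, Matrix.mulVec, Pi.star_apply, Finset.mul_sum]
  rw [Finset.sum_comm]
  refine Finset.sum_congr rfl fun i _ => Finset.sum_congr rfl fun j _ => ?_
  ring

lemma aux_expval_pure_sq {n : Type*} [Fintype n] (v : n → ℂ) (A : Matrix n n ℂ)
    (hA : A.IsHermitian) :
    expval (pureState v) (A * A) = ∑ i, Complex.normSq ((A *ᵥ v) i) := by
  rw [aux_expval_pureState, ← Matrix.mulVec_mulVec, dotProduct_mulVec]
  have h1 : star v ᵥ* A = star (A *ᵥ v) := by
    rw [Matrix.star_mulVec, hA.eq]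
  rw [h1]
  have h2 : star (A *ᵥ v) ⬝ᵥ (A *ᵥ v) = ((∑ i, Complex.normSq ((A *ᵥ v) i) : ℝ) : ℂ) := by
    simp [dotProduct, Complex.normSq_eq_conj_mul_self]
  rw [h2, Complex.ofReal_re]

lemma aux_sum_pairs (d : ℕ) (g : ℕ → ℕ → ℝ) :
    ∑ a : Fin d, ∑ b : Fin d, (if (b : ℕ) = (a : ℕ) + 1 then g a b else 0)
      = ∑ k ∈ Finset.range (d - 1), g k (k + 1) := by
  have h1 : ∀ a : Fin d, ∑ b : Fin d, (if (b : ℕ) = (a : ℕ) + 1 then g a b else 0)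
      = if (a : ℕ) + 1 < d then g a ((a : ℕ) + 1) else 0 := by
    intro a
    rw [Fin.sum_univ_eq_sum_range (fun b => if b = (a : ℕ) + 1 then g a b else 0)]
    rw [Finset.sum_ite_eq' (Finset.range d) ((a : ℕ) + 1) (fun b => g a b)]
    simp [Finset.mem_range]
  simp_rw [h1]
  rw [Fin.sum_univ_eq_sum_range (fun a => if a + 1 < d then g a (a + 1) else 0)]
  rcases Nat.eq_zero_or_pos d with h | h
  · simp [h]
  · obtain ⟨e, rfl⟩ : ∃ e, d = e + 1 := ⟨d - 1, (Nat.succ_pred_eq_of_pos h).symm⟩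
    rw [Finset.sum_range_succ]
    simp only [Nat.add_sub_cancel, add_lt_add_iff_right]
    rw [if_neg (lt_irrefl e), add_zero]
    exact Finset.sum_congr rfl fun k hk => if_pos (by have := Finset.mem_range.mp hk; omega)

/-- Abbreviation for the off-diagonal coefficient of the raising operator. -/
noncomputable def auxFc (d : ℕ) (k : ℕ) : ℝ :=
  Real.sqrt (((d : ℝ) - 1) / 2 * (((d : ℝ) - 1) / 2 + 1) -
    ((k : ℝ) - ((d : ℝ) - 1) / 2) * (((k : ℝ) - ((d : ℝ) - 1) / 2) + 1))

lemma auxFc_sq (d k : ℕ) (hk : k + 1 < d) :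
    auxFc d k ^ 2 = ((k : ℝ) + 1) * ((d : ℝ) - (k + 1)) := by
  have harg : ((d : ℝ) - 1) / 2 * (((d : ℝ) - 1) / 2 + 1) -
      ((k : ℝ) - ((d : ℝ) - 1) / 2) * (((k : ℝ) - ((d : ℝ) - 1) / 2) + 1)
      = ((k : ℝ) + 1) * ((d : ℝ) - (k + 1)) := by push_cast; ring
  have hnn : (0 : ℝ) ≤ ((k : ℝ) + 1) * ((d : ℝ) - (k + 1)) := by
    apply mul_nonneg (by positivity)
    have : (k : ℝ) + 1 ≤ (d : ℝ) := by exact_mod_cast hk.le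
    push_cast; linarith
  rw [auxFc, harg, Real.sq_sqrt hnn]

lemma aux_spinPlus_apply (d : ℕ) (a b : Fin d) :
    spinPlus d a b = if (a : ℕ) = (b : ℕ) + 1 then (auxFc d b : ℂ) else 0 := rfl

lemma aux_spinX_apply (d : ℕ) (a b : Fin d) :
    spinX d a b = ((((if (a : ℕ) = (b : ℕ) + 1 then auxFc d b else 0) +
      (if (b : ℕ) = (a : ℕ) + 1 then auxFc d a else 0)) / 2 : ℝ) : ℂ) := by
  simp only [spinX, Matrix.smul_apply, Matrix.add_apply, Matrix.conjTranspose_apply,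
    aux_spinPlus_apply, smul_eq_mul]
  split_ifs <;> simp [Complex.star_def, Complex.conj_ofReal] <;> push_cast <;> ring

lemma aux_spinY_apply (d : ℕ) (a b : Fin d) :
    spinY d a b = Complex.I * ((((if (b : ℕ) = (a : ℕ) + 1 then auxFc d a else 0) -
      (if (a : ℕ) = (b : ℕ) + 1 then auxFc d b else 0)) / 2 : ℝ) : ℂ) := by
  simp only [spinY, Matrix.smul_apply, Matrix.sub_apply, Matrix.conjTranspose_apply,
    aux_spinPlus_apply, smul_eq_mul]
  split_ifs <;> simp [Complex.star_def, Complex.conj_ofReal] <;> push_cast <;> ring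

lemma aux_kron_one_mulVec (d : ℕ) (X : Matrix (Fin d) (Fin d) ℂ) (v : Fin d → ℂ) (a b : Fin d) :
    ((X ⊗ₖ (1 : Matrix (Fin d) (Fin d) ℂ)) *ᵥ
      (fun p : Fin d × Fin d => if p.1 = p.2 then v p.1 else 0)) (a, b) = X a b * v b := by
  simp only [Matrix.mulVec, dotProduct, Fintype.sum_prod_type, Matrix.kroneckerMap_apply,
    Matrix.one_apply, mul_ite, ite_mul, one_mul, zero_mul, mul_zero, mul_one]
  simp [Finset.sum_ite_eq, Finset.sum_ite_eq']

lemma aux_one_kron_mulVec (d : ℕ) (X : Matrix (Fin d) (Fin d) ℂ) (v : Fin d → ℂ) (a b : Fin d) :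
    (((1 : Matrix (Fin d) (Fin d) ℂ) ⊗ₖ X) *ᵥ
      (fun p : Fin d × Fin d => if p.1 = p.2 then v p.1 else 0)) (a, b) = X b a * v a := by
  simp only [Matrix.mulVec, dotProduct, Fintype.sum_prod_type, Matrix.kroneckerMap_apply,
    Matrix.one_apply, mul_ite, ite_mul, one_mul, zero_mul, mul_zero, mul_one]
  simp [Finset.sum_ite_eq, Finset.sum_ite_eq']

lemma aux_kron_hermitian {d : ℕ} {X Y : Matrix (Fin d) (Fin d) ℂ}
    (hX : X.IsHermitian) (hY : Y.IsHermitian) : (X ⊗ₖ Y).IsHermitian := by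
  ext ⟨a, b⟩ ⟨c, e⟩
  simp only [Matrix.conjTranspose_apply, Matrix.kroneckerMap_apply, star_mul']
  rw [hY.apply, hX.apply]

end SpinAux

/-- For |ψ⟩ = Σ_k √λ_k |kk⟩ with j = (d-1)/2, the sum of variances of the
collective spin operators j_x⊗1 - 1⊗j_x, j_y⊗1 + 1⊗j_y, j_z⊗1 - 1⊗j_z equals
Σ_{k=1}^{d-1} k(d-k)(√λ_k - √λ_{k+1})². -/
theorem collective_spin_variance_of_schmidt_form_state
    (d : ℕ) (hd : 2 ≤ d) (lam : Fin d → ℝ)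
    (hpos : ∀ k, 0 ≤ lam k) (hsum : ∑ k, lam k = 1)
    (ψ : Fin d × Fin d → ℂ)
    (hψ : ψ = fun p => if p.1 = p.2 then (Real.sqrt (lam p.1) : ℂ) else 0) :
    varState (pureState ψ) (spinX d ⊗ₖ (1 : Matrix (Fin d) (Fin d) ℂ) - 1 ⊗ₖ spinX d) +
    varState (pureState ψ) (spinY d ⊗ₖ (1 : Matrix (Fin d) (Fin d) ℂ) + 1 ⊗ₖ spinY d) +
    varState (pureState ψ) (spinZ d ⊗ₖ (1 : Matrix (Fin d) (Fin d) ℂ) - 1 ⊗ₖ spinZ d) =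
      spinVarSum d lam := by
  classical
  set v : Fin d → ℂ := fun k => ((Real.sqrt (lam k) : ℝ) : ℂ) with hv
  have hψ' : ψ = fun p : Fin d × Fin d => if p.1 = p.2 then v p.1 else 0 := hψ
  set s' : ℕ → ℝ := fun k => Real.sqrt (if h : k < d then lam ⟨k, h⟩ else 0) with hs'def
  have hs' : ∀ k : Fin d, Real.sqrt (lam k) = s' (k : ℕ) := by
    intro k
    simp [hs'def, k.isLt]
  have hXsymm : ∀ a b : Fin d, spinX d b a = spinX d a b := by
    intro a b
    rw [aux_spinX_apply, aux_spinX_apply]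
    exact congrArg Complex.ofReal (by ring)
  have hYanti : ∀ a b : Fin d, spinY d b a = - spinY d a b := by
    intro a b
    rw [aux_spinY_apply, aux_spinY_apply]
    generalize (if (b : ℕ) = (a : ℕ) + 1 then auxFc d (a : ℕ) else 0) = u
    generalize (if (a : ℕ) = (b : ℕ) + 1 then auxFc d (b : ℕ) else 0) = w
    push_cast
    ring
  have hXh : (spinX d).IsHermitian := by
    show (spinX d)ᴴ = spinX d
    ext a b
    rw [Matrix.conjTranspose_apply, aux_spinX_apply, aux_spinX_apply, Complex.star_def,
      Complex.conj_ofReal]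
    exact congrArg Complex.ofReal (by ring)
  have hYh : (spinY d).IsHermitian := by
    show (spinY d)ᴴ = spinY d
    ext a b
    rw [Matrix.conjTranspose_apply, aux_spinY_apply, aux_spinY_apply]
    generalize (if (b : ℕ) = (a : ℕ) + 1 then auxFc d (a : ℕ) else 0) = u
    generalize (if (a : ℕ) = (b : ℕ) + 1 then auxFc d (b : ℕ) else 0) = w
    push_cast
    simp only [Complex.star_def, map_add, map_sub, _root_.map_mul, map_div₀, map_neg,
      _root_.map_one, Complex.conj_I, Complex.conj_ofReal, map_ofNat]
    ring
  have hAh : (spinX d ⊗ₖ (1 : Matrix (Fin d) (Fin d) ℂ) - 1 ⊗ₖ spinX d).IsHermitian :=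
    (aux_kron_hermitian hXh Matrix.isHermitian_one).sub
      (aux_kron_hermitian Matrix.isHermitian_one hXh)
  have hBh : (spinY d ⊗ₖ (1 : Matrix (Fin d) (Fin d) ℂ) + 1 ⊗ₖ spinY d).IsHermitian :=
    (aux_kron_hermitian hYh Matrix.isHermitian_one).add
      (aux_kron_hermitian Matrix.isHermitian_one hYh)
  have hwA : ∀ a b : Fin d,
      ((spinX d ⊗ₖ (1 : Matrix (Fin d) (Fin d) ℂ) - 1 ⊗ₖ spinX d) *ᵥ ψ) (a, b)
        = spinX d a b * (v b - v a) := by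
    intro a b
    rw [hψ', Matrix.sub_mulVec]
    simp only [Pi.sub_apply]
    rw [aux_kron_one_mulVec, aux_one_kron_mulVec, hXsymm a b]
    ring
  have hwB : ∀ a b : Fin d,
      ((spinY d ⊗ₖ (1 : Matrix (Fin d) (Fin d) ℂ) + 1 ⊗ₖ spinY d) *ᵥ ψ) (a, b)
        = spinY d a b * (v b - v a) := by
    intro a b
    rw [hψ', Matrix.add_mulVec]
    simp only [Pi.add_apply]
    rw [aux_kron_one_mulVec, aux_one_kron_mulVec, hYanti a b]
    ring
  have hwC : (spinZ d ⊗ₖ (1 : Matrix (Fin d) (Fin d) ℂ) - 1 ⊗ₖ spinZ d) *ᵥ ψ = 0 := by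
    funext p
    rcases p with ⟨a, b⟩
    rw [hψ', Matrix.sub_mulVec]
    simp only [Pi.sub_apply, Pi.zero_apply]
    rw [aux_kron_one_mulVec, aux_one_kron_mulVec]
    by_cases h : a = b
    · subst h
      ring
    · simp [spinZ, Matrix.diagonal_apply_ne _ h, Matrix.diagonal_apply_ne _ (Ne.symm h)]
  have hEA : expval (pureState ψ) (spinX d ⊗ₖ (1 : Matrix (Fin d) (Fin d) ℂ) - 1 ⊗ₖ spinX d)
      = 0 := by
    rw [aux_expval_pureState]
    have h0 : star ψ ⬝ᵥ ((spinX d ⊗ₖ (1 : Matrix (Fin d) (Fin d) ℂ) - 1 ⊗ₖ spinX d) *ᵥ ψ)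
        = 0 := by
      unfold dotProduct
      apply Finset.sum_eq_zero
      rintro ⟨a, b⟩ -
      rw [hwA a b]
      by_cases h : a = b
      · subst h; simp
      · rw [hψ']; simp [h]
    rw [h0, Complex.zero_re]
  have hEB : expval (pureState ψ) (spinY d ⊗ₖ (1 : Matrix (Fin d) (Fin d) ℂ) + 1 ⊗ₖ spinY d)
      = 0 := by
    rw [aux_expval_pureState]
    have h0 : star ψ ⬝ᵥ ((spinY d ⊗ₖ (1 : Matrix (Fin d) (Fin d) ℂ) + 1 ⊗ₖ spinY d) *ᵥ ψ)
        = 0 := by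
      unfold dotProduct
      apply Finset.sum_eq_zero
      rintro ⟨a, b⟩ -
      rw [hwB a b]
      by_cases h : a = b
      · subst h; simp
      · rw [hψ']; simp [h]
    rw [h0, Complex.zero_re]
  have hVarC : varState (pureState ψ)
      (spinZ d ⊗ₖ (1 : Matrix (Fin d) (Fin d) ℂ) - 1 ⊗ₖ spinZ d) = 0 := by
    unfold varState
    have hEC : expval (pureState ψ)
        (spinZ d ⊗ₖ (1 : Matrix (Fin d) (Fin d) ℂ) - 1 ⊗ₖ spinZ d) = 0 := by
      rw [aux_expval_pureState, hwC]
      simp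
    have hC2 : expval (pureState ψ)
        ((spinZ d ⊗ₖ (1 : Matrix (Fin d) (Fin d) ℂ) - 1 ⊗ₖ spinZ d) *
          (spinZ d ⊗ₖ (1 : Matrix (Fin d) (Fin d) ℂ) - 1 ⊗ₖ spinZ d)) = 0 := by
      rw [aux_expval_pureState, ← Matrix.mulVec_mulVec, hwC]
      simp
    rw [hEC, hC2]
    ring
  have hA2 : expval (pureState ψ)
      ((spinX d ⊗ₖ (1 : Matrix (Fin d) (Fin d) ℂ) - 1 ⊗ₖ spinX d) *
        (spinX d ⊗ₖ (1 : Matrix (Fin d) (Fin d) ℂ) - 1 ⊗ₖ spinX d))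
      = ∑ a : Fin d, ∑ b : Fin d, Complex.normSq (spinX d a b * (v b - v a)) := by
    rw [aux_expval_pure_sq ψ _ hAh, Fintype.sum_prod_type]
    exact Finset.sum_congr rfl fun a _ => Finset.sum_congr rfl fun b _ => by rw [hwA a b]
  have hB2 : expval (pureState ψ)
      ((spinY d ⊗ₖ (1 : Matrix (Fin d) (Fin d) ℂ) + 1 ⊗ₖ spinY d) *
        (spinY d ⊗ₖ (1 : Matrix (Fin d) (Fin d) ℂ) + 1 ⊗ₖ spinY d))
      = ∑ a : Fin d, ∑ b : Fin d, Complex.normSq (spinY d a b * (v b - v a)) := by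
    rw [aux_expval_pure_sq ψ _ hBh, Fintype.sum_prod_type]
    exact Finset.sum_congr rfl fun a _ => Finset.sum_congr rfl fun b _ => by rw [hwB a b]
  have hpt : ∀ a b : Fin d,
      Complex.normSq (spinX d a b * (v b - v a)) + Complex.normSq (spinY d a b * (v b - v a))
      = (if (b : ℕ) = (a : ℕ) + 1 then
            auxFc d (a : ℕ) ^ 2 * (s' (b : ℕ) - s' (a : ℕ)) ^ 2 / 2 else 0)
        + (if (a : ℕ) = (b : ℕ) + 1 then
            auxFc d (b : ℕ) ^ 2 * (s' (b : ℕ) - s' (a : ℕ)) ^ 2 / 2 else 0) := by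
    intro a b
    have hΔ : v b - v a = ((s' (b : ℕ) - s' (a : ℕ) : ℝ) : ℂ) := by
      rw [hv]
      push_cast [hs' a, hs' b]
      ring
    rw [aux_spinX_apply, aux_spinY_apply, hΔ, ← Complex.ofReal_mul, mul_assoc,
      ← Complex.ofReal_mul, Complex.normSq_mul, Complex.normSq_I, one_mul,
      Complex.normSq_ofReal, Complex.normSq_ofReal]
    split_ifs <;> ring
  have hsum1 : ∑ a : Fin d, ∑ b : Fin d,
      (if (b : ℕ) = (a : ℕ) + 1 then
        auxFc d (a : ℕ) ^ 2 * (s' (b : ℕ) - s' (a : ℕ)) ^ 2 / 2 else 0)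
      = ∑ k ∈ Finset.range (d - 1), auxFc d k ^ 2 * (s' (k + 1) - s' k) ^ 2 / 2 :=
    aux_sum_pairs d (fun m n => auxFc d m ^ 2 * (s' n - s' m) ^ 2 / 2)
  have hsum2 : ∑ a : Fin d, ∑ b : Fin d,
      (if (a : ℕ) = (b : ℕ) + 1 then
        auxFc d (b : ℕ) ^ 2 * (s' (b : ℕ) - s' (a : ℕ)) ^ 2 / 2 else 0)
      = ∑ k ∈ Finset.range (d - 1), auxFc d k ^ 2 * (s' k - s' (k + 1)) ^ 2 / 2 := by
    rw [Finset.sum_comm]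
    exact aux_sum_pairs d (fun m n => auxFc d m ^ 2 * (s' m - s' n) ^ 2 / 2)
  have hfin : (∑ k ∈ Finset.range (d - 1), auxFc d k ^ 2 * (s' (k + 1) - s' k) ^ 2 / 2)
      + (∑ k ∈ Finset.range (d - 1), auxFc d k ^ 2 * (s' k - s' (k + 1)) ^ 2 / 2)
      = spinVarSum d lam := by
    rw [← Finset.sum_add_distrib]
    unfold spinVarSum
    refine Finset.sum_congr rfl fun k hk => ?_
    have hk' : k + 1 < d := by have := Finset.mem_range.mp hk; omega
    rw [auxFc_sq d k hk']
    simp only [hs'def]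
    push_cast
    ring
  rw [hVarC, add_zero]
  unfold varState
  rw [hEA, hEB, hA2, hB2]
  have hz : (0 : ℝ) ^ 2 = 0 := by norm_num
  rw [hz, sub_zero, sub_zero]
  calc (∑ a : Fin d, ∑ b : Fin d, Complex.normSq (spinX d a b * (v b - v a)))
      + (∑ a : Fin d, ∑ b : Fin d, Complex.normSq (spinY d a b * (v b - v a)))
      = ∑ a : Fin d, ∑ b : Fin d,
        (Complex.normSq (spinX d a b * (v b - v a))
          + Complex.normSq (spinY d a b * (v b - v a))) := by
        rw [← Finset.sum_add_distrib]
        exact Finset.sum_congr rfl fun a _ => (Finset.sum_add_distrib).symm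
    _ = (∑ a : Fin d, ∑ b : Fin d,
          (if (b : ℕ) = (a : ℕ) + 1 then
            auxFc d (a : ℕ) ^ 2 * (s' (b : ℕ) - s' (a : ℕ)) ^ 2 / 2 else 0))
        + (∑ a : Fin d, ∑ b : Fin d,
          (if (a : ℕ) = (b : ℕ) + 1 then
            auxFc d (b : ℕ) ^ 2 * (s' (b : ℕ) - s' (a : ℕ)) ^ 2 / 2 else 0)) := by
        simp_rw [hpt]
        rw [← Finset.sum_add_distrib]
        exact Finset.sum_congr rfl fun a _ => Finset.sum_add_distrib
    _ = spinVarSum d lam := by rw [hsum1, hsum2]; exact hfin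
end

section
/- Let j be a positive half-integer, d = 2j+1, and 1 ≤ r < d. Then B_{j,r} ≥ 2j/r². -/
open Matrix Kronecker BigOperators Finset
open scoped ComplexOrder

lemma Bspin_aux (d r : ℕ) (hd : 2 ≤ d) (hr : 1 ≤ r) (hrd : r < d)
    (lam : Fin d → ℝ) (hpos : ∀ k, 0 ≤ lam k) (hsum : ∑ k, lam k = 1)
    (hcard : (Finset.univ.filter fun k => lam k ≠ 0).card ≤ r) :
    ((d : ℝ) - 1) / (r : ℝ) ^ 2 ≤ spinVarSum d lam := by
  have hd0 : 0 < d := by omega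
  have hrR : (0:ℝ) < r := by exact_mod_cast hr
  set T := Finset.univ.filter fun k : Fin d => lam k ≠ 0 with hT
  -- Step 1: there is an entry with lam m ≥ 1/r
  have hsum' : ∑ k ∈ T, lam k = 1 := by
    rw [hT, Finset.sum_filter_ne_zero]; exact hsum
  have hTne : T.Nonempty := by
    rcases T.eq_empty_or_nonempty with h | h
    · rw [h, Finset.sum_empty] at hsum'; norm_num at hsum'
    · exact h
  obtain ⟨m, -, hm⟩ : ∃ m ∈ T, (1:ℝ)/r ≤ lam m := by
    apply Finset.exists_le_of_sum_le hTne
    have h1 : ∑ _k ∈ T, (1:ℝ)/r = T.card * (1/r) := by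
      rw [Finset.sum_const, nsmul_eq_mul]
    rw [h1, hsum']
    have hc : (T.card : ℝ) ≤ r := by exact_mod_cast hcard
    calc (T.card : ℝ) * (1/r) ≤ r * (1/r) :=
          mul_le_mul_of_nonneg_right hc (by positivity)
      _ = 1 := by field_simp
  -- Step 2: there is a zero entry within distance r of m
  set a := min (m : ℕ) (d - r - 1) with ha
  have hmlt : (m : ℕ) < d := m.isLt
  have haI : a + r + 1 ≤ d := by omega
  have hmI : a ≤ (m:ℕ) ∧ (m:ℕ) < a + r + 1 := by omega
  obtain ⟨z, hz1, hz2, hz0⟩ :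
      ∃ z : Fin d, a ≤ (z:ℕ) ∧ (z:ℕ) < a + r + 1 ∧ lam z = 0 := by
    by_contra hcon
    push_neg at hcon
    have hle : (Finset.Ico a (a + r + 1)).card ≤ T.card := by
      apply Finset.card_le_card_of_injOn
        (fun k => (⟨k % d, Nat.mod_lt k hd0⟩ : Fin d))
      · intro k hk
        rw [Finset.coe_Ico, Set.mem_Ico] at hk
        have hkd : k < d := by omega
        have heq : (⟨k % d, Nat.mod_lt k hd0⟩ : Fin d) = ⟨k, hkd⟩ := by
          ext; simp [Nat.mod_eq_of_lt hkd]
        show (⟨k % d, Nat.mod_lt k hd0⟩ : Fin d) ∈ T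
        rw [heq, hT, Finset.mem_filter]
        exact ⟨Finset.mem_univ _, hcon ⟨k, hkd⟩ (by simpa using hk.1) (by simpa using hk.2)⟩
      · intro x hx y hy hxy
        simp only [Finset.coe_Ico, Set.mem_Ico] at hx hy
        have hx' : x < d := by omega
        have hy' : y < d := by omega
        have := congrArg Fin.val hxy
        simpa [Nat.mod_eq_of_lt hx', Nat.mod_eq_of_lt hy'] using this
    rw [Nat.card_Ico] at hle
    omega
  -- Step 3: set up the path from z to m
  have hmne : lam m ≠ 0 := by
    intro h0
    rw [h0] at hm
    have : (0:ℝ) < 1/r := by positivity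
    linarith
  have hzm : (z:ℕ) ≠ (m:ℕ) := by
    intro h
    exact hmne (by rw [← hz0]; congr 1; exact Fin.ext h.symm)
  set p := min (z:ℕ) (m:ℕ) with hp
  set q := max (z:ℕ) (m:ℕ) with hq
  have hpq : p < q := by omega
  have hqr : q - p ≤ r := by omega
  have hqd : q < d := by have := z.isLt; omega
  obtain ⟨S, hS⟩ : ∃ S : ℕ → ℝ, ∀ k, S k = Real.sqrt (if h : k < d then lam ⟨k, h⟩ else 0) :=
    ⟨_, fun _ => rfl⟩
  have hSm : S (m:ℕ) = Real.sqrt (lam m) := by rw [hS]; simp [hmlt]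
  have hSz : S (z:ℕ) = 0 := by rw [hS]; simp [z.isLt, hz0]
  have hsq : (S q - S p)^2 = lam m := by
    have h1 : (S q - S p)^2 = (Real.sqrt (lam m))^2 := by
      rcases le_or_gt (z:ℕ) (m:ℕ) with h | h
      · rw [hp, hq, min_eq_left h, max_eq_right h, hSz, hSm]; ring
      · rw [hp, hq, min_eq_right h.le, max_eq_left h.le, hSz, hSm]; ring
    rw [h1, Real.sq_sqrt (hpos m)]
  -- Step 4: telescoping and Cauchy-Schwarz
  have htel : S q - S p = ∑ i ∈ Finset.range (q - p), (S (p + i + 1) - S (p + i)) := by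
    have h := Finset.sum_range_sub (fun i => S (p + i)) (q - p)
    have h2 : p + (q - p) = q := by omega
    rw [h2, Nat.add_zero] at h
    rw [← h]
    apply Finset.sum_congr rfl
    intro i _
    rw [← Nat.add_assoc]
  have hCS : (S q - S p)^2
      ≤ ((q - p : ℕ) : ℝ) * ∑ i ∈ Finset.range (q - p), (S (p + i + 1) - S (p + i))^2 := by
    rw [htel]
    simpa using sq_sum_le_card_mul_sum_sq
      (s := Finset.range (q - p)) (f := fun i => S (p + i + 1) - S (p + i))
  have hIcoRange : ∑ k ∈ Finset.Ico p q, (S k - S (k+1))^2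
      = ∑ i ∈ Finset.range (q - p), (S (p + i + 1) - S (p + i))^2 := by
    rw [Finset.sum_Ico_eq_sum_range]
    apply Finset.sum_congr rfl
    intro i _
    ring
  have hqp0 : (0:ℝ) < ((q - p : ℕ) : ℝ) := by
    have : 0 < q - p := by omega
    exact_mod_cast this
  have hsumIco : lam m / ((q - p : ℕ) : ℝ) ≤ ∑ k ∈ Finset.Ico p q, (S k - S (k+1))^2 := by
    rw [div_le_iff₀ hqp0, hIcoRange]
    calc lam m = (S q - S p)^2 := hsq.symm
      _ ≤ ((q - p : ℕ) : ℝ) * ∑ i ∈ Finset.range (q - p), (S (p + i + 1) - S (p + i))^2 := hCS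
      _ = (∑ i ∈ Finset.range (q - p), (S (p + i + 1) - S (p + i))^2) * ((q - p : ℕ) : ℝ) := by
          ring
  -- Step 5: assemble
  have hsub : Finset.Ico p q ⊆ Finset.range (d - 1) := by
    intro k hk
    rw [Finset.mem_Ico] at hk
    rw [Finset.mem_range]
    omega
  have hd1 : (0:ℝ) ≤ (d:ℝ) - 1 := by
    have : (1:ℝ) ≤ d := by exact_mod_cast (by omega : 1 ≤ d)
    linarith
  have hmain : ((d:ℝ) - 1) * ∑ k ∈ Finset.Ico p q, (S k - S (k+1))^2 ≤ spinVarSum d lam := by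
    have h1 : spinVarSum d lam
        = ∑ k ∈ Finset.range (d-1), ((k:ℝ)+1)*((d:ℝ)-((k:ℝ)+1))*(S k - S (k+1))^2 := by
      unfold spinVarSum
      apply Finset.sum_congr rfl
      intro k _
      rw [hS k, hS (k+1)]
    rw [h1, Finset.mul_sum]
    calc ∑ k ∈ Finset.Ico p q, ((d:ℝ) - 1) * (S k - S (k+1))^2
        ≤ ∑ k ∈ Finset.Ico p q, ((k:ℝ)+1)*((d:ℝ)-((k:ℝ)+1))*(S k - S (k+1))^2 := by
          apply Finset.sum_le_sum
          intro k hk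
          have hk' := hsub hk
          rw [Finset.mem_range] at hk'
          have hkd : (k:ℝ) + 1 ≤ (d:ℝ) - 1 := by
            have : (k:ℝ) + 2 ≤ (d:ℝ) := by exact_mod_cast (by omega : k + 2 ≤ d)
            linarith
          have hk0 : (0:ℝ) ≤ (k:ℝ) := Nat.cast_nonneg k
          have hdk : (0:ℝ) ≤ (d:ℝ) - (k:ℝ) - 2 := by linarith
          have hcoef : (d:ℝ) - 1 ≤ ((k:ℝ)+1)*((d:ℝ)-((k:ℝ)+1)) := by
            nlinarith [mul_nonneg hk0 hdk]
          exact mul_le_mul_of_nonneg_right hcoef (sq_nonneg _)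
      _ ≤ ∑ k ∈ Finset.range (d-1), ((k:ℝ)+1)*((d:ℝ)-((k:ℝ)+1))*(S k - S (k+1))^2 := by
          apply Finset.sum_le_sum_of_subset_of_nonneg hsub
          intro k hk _
          have hk' : k < d - 1 := Finset.mem_range.mp hk
          have hkd : (k:ℝ) + 1 ≤ (d:ℝ) - 1 := by
            have : (k:ℝ) + 2 ≤ (d:ℝ) := by exact_mod_cast (by omega : k + 2 ≤ d)
            linarith
          have hk0 : (0:ℝ) ≤ (k:ℝ) := Nat.cast_nonneg k
          exact mul_nonneg (mul_nonneg (by linarith) (by linarith)) (sq_nonneg _)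
  have hqpr : ((q - p : ℕ) : ℝ) ≤ r := by exact_mod_cast hqr
  calc ((d:ℝ) - 1) / (r:ℝ)^2 = ((d:ℝ) - 1) * ((1/r)/r) := by
        ring
    _ ≤ ((d:ℝ) - 1) * (lam m / ((q - p : ℕ) : ℝ)) := by
        apply mul_le_mul_of_nonneg_left _ hd1
        exact div_le_div₀ (hpos m) hm hqp0 hqpr
    _ ≤ ((d:ℝ) - 1) * ∑ k ∈ Finset.Ico p q, (S k - S (k+1))^2 :=
        mul_le_mul_of_nonneg_left hsumIco hd1
    _ ≤ spinVarSum d lam := hmain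

/-- B_{j,r} ≥ 2j/r², where 2j = d - 1. -/
theorem Bspin_lower_bound_simple
    (d r : ℕ) (hd : 2 ≤ d) (hr : 1 ≤ r) (hrd : r < d) :
    ((d : ℝ) - 1) / (r : ℝ) ^ 2 ≤ Bspin d r := by
  have hd0 : 0 < d := by omega
  unfold Bspin
  apply le_csInf
  · refine ⟨spinVarSum d (fun k => if k = (⟨0, hd0⟩ : Fin d) then 1 else 0),
      (fun k => if k = (⟨0, hd0⟩ : Fin d) then 1 else 0), fun k => ?_, ?_, ?_, rfl⟩
    · dsimp only
      split_ifs <;> norm_num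
    · simp
    · calc (Finset.univ.filter fun k : Fin d =>
            (if k = (⟨0, hd0⟩ : Fin d) then (1:ℝ) else 0) ≠ 0).card
          ≤ ({(⟨0, hd0⟩ : Fin d)} : Finset (Fin d)).card := by
            apply Finset.card_le_card
            intro k hk
            rw [Finset.mem_filter] at hk
            rw [Finset.mem_singleton]
            by_contra hne
            rw [if_neg hne] at hk
            exact hk.2 rfl
        _ = 1 := Finset.card_singleton _
        _ ≤ r := hr
  · rintro v ⟨lam, h1, h2, h3, rfl⟩
    exact Bspin_aux d r hd hr hrd lam h1 h2 h3
end
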